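/- For every r ∈ ℝ, the sublevel set { ({C_i}, μ, Λ) ∈ (ℝ^n)^M × ℝ^n × S_n^{++}(ℝ) : f({C_i}, μ, Λ) ≤ r } is bounded. -/

import Mathlib

open Matrix Filter

noncomputable def f (n M : ℕ) (κ ν : ℝ) (Z : Fin M → Fin n → ℝ)
    (D : Fin M → Matrix (Fin n) (Fin n) ℝ) (SN : Fin M → Matrix (Fin n) (Fin n) ℝ)
    (μ0 : Fin n → ℝ) (S0 : Matrix (Fin n) (Fin n) ℝ)
    (C : Fin M → Fin n → ℝ) (μ : Fin n → ℝ) (Λ : Matrix (Fin n) (Fin n) ℝ) : ℝ :=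
  (1/2) * ∑ i, (Z i - (D i).mulVec (C i)) ⬝ᵥ ((SN i)⁻¹).mulVec (Z i - (D i).mulVec (C i))
    - ((ν - n + M)/2) * Real.log Λ.det
    + (1/2) * ∑ i, (C i - μ) ⬝ᵥ Λ.mulVec (C i - μ)
    + (κ/2) * ((μ - μ0) ⬝ᵥ Λ.mulVec (μ - μ0))
    + (1/2) * (ν • S0 * Λ).trace

attribute [local instance] Matrix.normedAddCommGroup

set_option maxHeartbeats 4000000

section Aux
variable {n : ℕ}

lemma trace_eq_sum_eigen {A : Matrix (Fin n) (Fin n) ℝ} (hA : A.IsHermitian) :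
    A.trace = ∑ i, hA.eigenvalues i := by
  conv_lhs => rw [hA.spectral_theorem, Unitary.conjStarAlgAut_apply]
  rw [Matrix.trace_mul_cycle,
    (Matrix.mem_unitaryGroup_iff').mp (Matrix.IsHermitian.eigenvectorUnitary hA).2,
    Matrix.one_mul, Matrix.trace_diagonal]
  simp

lemma sub_smul_psd {A : Matrix (Fin n) (Fin n) ℝ} (hA : A.IsHermitian) {c : ℝ}
    (hc : ∀ i, c ≤ hA.eigenvalues i) : (A - c • 1).PosSemidef := by
  have h1 : A - c • 1 =
      (Matrix.IsHermitian.eigenvectorUnitary hA : Matrix (Fin n) (Fin n) ℝ) *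
      Matrix.diagonal (fun i => hA.eigenvalues i - c) *
      (star (Matrix.IsHermitian.eigenvectorUnitary hA : Matrix (Fin n) (Fin n) ℝ)) := by
    have hd : Matrix.diagonal (fun i => hA.eigenvalues i - c) =
        Matrix.diagonal (RCLike.ofReal ∘ hA.eigenvalues) - c • 1 := by
      ext i j
      by_cases h : i = j <;>
        simp [h, Matrix.diagonal_apply, Matrix.one_apply, Matrix.sub_apply, Matrix.smul_apply]
    rw [hd, Matrix.mul_sub, Matrix.sub_mul]
    rw [← Unitary.conjStarAlgAut_apply (S := ℝ), ← hA.spectral_theorem]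
    congr 1
    rw [Matrix.mul_smul, Matrix.smul_mul, Matrix.mul_one,
      (Matrix.mem_unitaryGroup_iff).mp (Matrix.IsHermitian.eigenvectorUnitary hA).2]
  have hd : (Matrix.diagonal (fun i => hA.eigenvalues i - c)).PosSemidef :=
    Matrix.PosSemidef.diagonal (fun i => sub_nonneg.mpr (hc i))
  rw [h1, Matrix.star_eq_conjTranspose]
  exact hd.mul_mul_conjTranspose_same _

lemma le_quad {A : Matrix (Fin n) (Fin n) ℝ} (hA : A.IsHermitian) {c : ℝ}
    (hc : ∀ i, c ≤ hA.eigenvalues i) (x : Fin n → ℝ) :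
    c * (x ⬝ᵥ x) ≤ x ⬝ᵥ A *ᵥ x := by
  have h := (sub_smul_psd hA hc).dotProduct_mulVec_nonneg x
  rw [star_trivial] at h
  rw [Matrix.sub_mulVec, dotProduct_sub, Matrix.smul_mulVec,
    Matrix.one_mulVec, dotProduct_smul, smul_eq_mul] at h
  linarith

lemma trace_mul_psd_nonneg {A B : Matrix (Fin n) (Fin n) ℝ} (hA : A.PosSemidef)
    (hB : B.PosSemidef) : 0 ≤ (A * B).trace := by
  obtain ⟨C, rfl⟩ : ∃ C : Matrix (Fin n) (Fin n) ℝ, B = Cᴴ * C := by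
    open scoped MatrixOrder in exact CStarAlgebra.nonneg_iff_eq_star_mul_self.mp hB.nonneg
  have hP : (C * A * Cᴴ).PosSemidef := hA.mul_mul_conjTranspose_same C
  have h2 : (A * (Cᴴ * C)).trace = (C * A * Cᴴ).trace := by
    rw [← Matrix.mul_assoc, Matrix.trace_mul_cycle]
  rw [h2, Matrix.trace]
  refine Finset.sum_nonneg fun i _ => ?_
  have := hP.dotProduct_mulVec_nonneg (Pi.single i 1)
  rw [star_trivial] at this
  simpa [dotProduct, Matrix.mulVec, Pi.single_apply] using this

lemma single_quad (A : Matrix (Fin n) (Fin n) ℝ) (i j : Fin n) :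
    Pi.single i (1:ℝ) ⬝ᵥ A *ᵥ Pi.single j 1 = A i j := by
  simp [dotProduct, Matrix.mulVec, Pi.single_apply]

lemma quad_expand (A : Matrix (Fin n) (Fin n) ℝ) (i j : Fin n) (s : ℝ) :
    (Pi.single i (1:ℝ) + s • (Pi.single j 1 : Fin n → ℝ)) ⬝ᵥ
        A *ᵥ (Pi.single i (1:ℝ) + s • (Pi.single j 1 : Fin n → ℝ))
      = A i i + s * A i j + s * A j i + s^2 * A j j := by
  rw [Matrix.mulVec_add, dotProduct_add, add_dotProduct, add_dotProduct,
    Matrix.mulVec_smul, dotProduct_smul, smul_dotProduct,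
    smul_dotProduct, dotProduct_smul]
  simp [dotProduct, Matrix.mulVec, Pi.single_apply, Finset.mul_sum, mul_ite,
    Finset.sum_ite_eq, Finset.sum_ite_eq']
  ring

lemma g_lower {a b t : ℝ} (ha : 0 < a) (hb : 0 < b) (ht : 0 < t) :
    a - a * Real.log (a/b) ≤ -a * Real.log t + b * t := by
  have h1 : Real.log (t * (b/a)) ≤ t * (b/a) - 1 :=
    Real.log_le_sub_one_of_pos (by positivity)
  have h2 : Real.log (t * (b/a)) = Real.log t + Real.log (b/a) :=
    Real.log_mul (ne_of_gt ht) (by positivity)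
  have h3 : Real.log (a/b) = - Real.log (b/a) := by
    rw [← Real.log_inv]; congr 1; field_simp
  have h4 : a * (t * (b/a)) = b * t := by field_simp
  nlinarith [mul_le_mul_of_nonneg_left h1 ha.le]

lemma log_le_lin {t c : ℝ} (ht : 0 < t) (hc : 0 < c) :
    Real.log t ≤ t / c - 1 + Real.log c := by
  have h1 : Real.log (t / c) ≤ t / c - 1 := Real.log_le_sub_one_of_pos (by positivity)
  rw [Real.log_div (ne_of_gt ht) (ne_of_gt hc)] at h1
  linarith

end Aux

/-- For every `r ∈ ℝ`, the sublevel set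
`{({C_i}, μ, Λ) : Λ ∈ S_n^{++}(ℝ), f({C_i}, μ, Λ) ≤ r}` is bounded. -/
theorem stmt_8 (n M : ℕ) (hn : 1 ≤ n) (hM : 1 ≤ M)
    (κ ν : ℝ) (hκ : 0 < κ) (hν : (n : ℝ) - 1 < ν)
    (Z : Fin M → Fin n → ℝ) (D : Fin M → Matrix (Fin n) (Fin n) ℝ)
    (SN : Fin M → Matrix (Fin n) (Fin n) ℝ) (hSN : ∀ i, (SN i).PosDef)
    (μ0 : Fin n → ℝ) (S0 : Matrix (Fin n) (Fin n) ℝ) (hS0 : S0.PosDef)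
    (r : ℝ) :
    Bornology.IsBounded
      {p : (Fin M → Fin n → ℝ) × (Fin n → ℝ) × Matrix (Fin n) (Fin n) ℝ |
        p.2.2.PosDef ∧ f n M κ ν Z D SN μ0 S0 p.1 p.2.1 p.2.2 ≤ r} := by
  haveI : Nonempty (Fin n) := Fin.pos_iff_nonempty.mp hn
  have hn' : (1:ℝ) ≤ n := by exact_mod_cast hn
  have hM' : (1:ℝ) ≤ M := by exact_mod_cast hM
  have hν0 : 0 < ν := by linarith
  obtain ⟨a, ha_def⟩ : ∃ y : ℝ, y = (ν - n + M)/2 := ⟨_, rfl⟩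
  have ha : 0 < a := by rw [ha_def]; linarith
  obtain ⟨ε, hε_def⟩ : ∃ y : ℝ, y = Finset.univ.inf' Finset.univ_nonempty hS0.1.eigenvalues := ⟨_, rfl⟩
  have hε : 0 < ε := by
    rw [hε_def, Finset.lt_inf'_iff]
    exact fun i _ => hS0.eigenvalues_pos i
  have hεle : ∀ i, ε ≤ hS0.1.eigenvalues i := fun i =>
    hε_def ▸ Finset.inf'_le _ (Finset.mem_univ i)
  obtain ⟨b, hb_def⟩ : ∃ y : ℝ, y = ν * ε / 2 := ⟨_, rfl⟩
  have hb : 0 < b := by rw [hb_def]; positivity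
  obtain ⟨m0, hm0_def⟩ : ∃ y : ℝ, y = a - a * Real.log (a/b) := ⟨_, rfl⟩
  obtain ⟨K, hK_def⟩ : ∃ y : ℝ, y = r - ((n:ℝ) - 1) * m0 := ⟨_, rfl⟩
  obtain ⟨K0, hK0_def⟩ : ∃ y : ℝ, y = r - (n:ℝ) * m0 := ⟨_, rfl⟩
  obtain ⟨lo, hlo_def⟩ : ∃ y : ℝ, y = Real.exp (-(K/a)) := ⟨_, rfl⟩
  have hlo : 0 < lo := hlo_def ▸ Real.exp_pos _
  obtain ⟨hi, hhi_def⟩ : ∃ y : ℝ, y = (K + a * (Real.log (2*a/b) - 1)) * 2 / b := ⟨_, rfl⟩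
  obtain ⟨Rμ, hRμ_def⟩ : ∃ y : ℝ, y = ‖μ0‖ + Real.sqrt (2*K0/(κ*lo)) := ⟨_, rfl⟩
  obtain ⟨RC, hRC_def⟩ : ∃ y : ℝ, y = Rμ + Real.sqrt (2*K0/lo) := ⟨_, rfl⟩
  obtain ⟨RΛ, hRΛ_def⟩ : ∃ y : ℝ, y = (n:ℝ) * hi := ⟨_, rfl⟩
  obtain ⟨R, hR_def⟩ : ∃ y : ℝ, y = max 0 (max RC (max Rμ RΛ)) := ⟨_, rfl⟩
  have hR0 : (0:ℝ) ≤ R := hR_def ▸ le_max_left _ _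
  rw [isBounded_iff_forall_norm_le]
  refine ⟨R, ?_⟩
  rintro ⟨C, μ, Λ⟩ ⟨hpd, hf⟩
  dsimp only at hpd hf
  unfold f at hf
  rw [← ha_def] at hf
  -- nonnegativity of quadratic terms
  have hQ1 : 0 ≤ ∑ i, (Z i - (D i).mulVec (C i)) ⬝ᵥ ((SN i)⁻¹).mulVec (Z i - (D i).mulVec (C i)) := by
    refine Finset.sum_nonneg fun i _ => ?_
    have h := ((hSN i).inv).posSemidef.dotProduct_mulVec_nonneg (Z i - (D i).mulVec (C i))
    rwa [star_trivial] at h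
  have hQ2 : ∀ i, 0 ≤ (C i - μ) ⬝ᵥ Λ.mulVec (C i - μ) := fun i => by
    have h := hpd.posSemidef.dotProduct_mulVec_nonneg (C i - μ); rwa [star_trivial] at h
  have hQ2s : 0 ≤ ∑ i, (C i - μ) ⬝ᵥ Λ.mulVec (C i - μ) :=
    Finset.sum_nonneg fun i _ => hQ2 i
  have hQ3 : 0 ≤ (μ - μ0) ⬝ᵥ Λ.mulVec (μ - μ0) := by
    have h := hpd.posSemidef.dotProduct_mulVec_nonneg (μ - μ0); rwa [star_trivial] at h
  -- eigenvalues of Λ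
  have hlam : ∀ i, 0 < hpd.1.eigenvalues i := fun i => hpd.eigenvalues_pos i
  have hdet : Λ.det = ∏ i, hpd.1.eigenvalues i := by
    have := hpd.1.det_eq_prod_eigenvalues
    simpa using this
  have hlog : Real.log Λ.det = ∑ i, Real.log (hpd.1.eigenvalues i) := by
    rw [hdet]
    exact Real.log_prod (fun i _ => (hlam i).ne')
  have htrΛ : Λ.trace = ∑ i, hpd.1.eigenvalues i := trace_eq_sum_eigen hpd.1
  -- trace inequality
  have htrace_ge : ε * Λ.trace ≤ (S0 * Λ).trace := by
    have h0 : 0 ≤ ((S0 - ε • 1) * Λ).trace :=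
      trace_mul_psd_nonneg (sub_smul_psd hS0.1 hεle) hpd.posSemidef
    rw [Matrix.sub_mul, Matrix.smul_mul, Matrix.one_mul, Matrix.trace_sub,
      Matrix.trace_smul, smul_eq_mul] at h0
    linarith
  have htr2 : (ν • S0 * Λ).trace = ν * (S0 * Λ).trace := by
    rw [Matrix.smul_mul, Matrix.trace_smul, smul_eq_mul]
  -- the sum of g over eigenvalues
  have hGeq : (∑ i, (-a * Real.log (hpd.1.eigenvalues i) + b * hpd.1.eigenvalues i))
      = -a * Real.log Λ.det + b * Λ.trace := by
    rw [hlog, htrΛ, Finset.sum_add_distrib, ← Finset.mul_sum, ← Finset.mul_sum]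
  have hT : b * Λ.trace ≤ (1/2) * (ν • S0 * Λ).trace := by
    rw [htr2, hb_def]
    nlinarith [htrace_ge]
  have hP2 : 0 ≤ (1/2) * ∑ i, (C i - μ) ⬝ᵥ Λ.mulVec (C i - μ) := by linarith
  have hP3 : 0 ≤ (κ/2) * ((μ - μ0) ⬝ᵥ Λ.mulVec (μ - μ0)) := mul_nonneg (by linarith) hQ3
  have hmain : (∑ i, (-a * Real.log (hpd.1.eigenvalues i) + b * hpd.1.eigenvalues i))
      + (1/2) * (∑ i, (C i - μ) ⬝ᵥ Λ.mulVec (C i - μ))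
      + (κ/2) * ((μ - μ0) ⬝ᵥ Λ.mulVec (μ - μ0)) ≤ r := by
    rw [hGeq]
    linarith
  have hg_lb : ∀ i : Fin n, m0 ≤ -a * Real.log (hpd.1.eigenvalues i) + b * hpd.1.eigenvalues i :=
    fun i => hm0_def ▸ g_lower ha hb (hlam i)
  have hG_lb : (n:ℝ) * m0 ≤ ∑ i, (-a * Real.log (hpd.1.eigenvalues i) + b * hpd.1.eigenvalues i) := by
    have h := Finset.card_nsmul_le_sum Finset.univ
      (fun i => -a * Real.log (hpd.1.eigenvalues i) + b * hpd.1.eigenvalues i) m0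
      (fun i _ => hg_lb i)
    simpa [nsmul_eq_mul, Finset.card_univ] using h
  -- per-eigenvalue bound
  have hKj : ∀ j, -a * Real.log (hpd.1.eigenvalues j) + b * hpd.1.eigenvalues j ≤ K := by
    intro j
    have h1 := Finset.add_sum_erase Finset.univ
      (fun i => -a * Real.log (hpd.1.eigenvalues i) + b * hpd.1.eigenvalues i)
      (Finset.mem_univ j)
    have h2 := Finset.card_nsmul_le_sum (Finset.univ.erase j)
      (fun i => -a * Real.log (hpd.1.eigenvalues i) + b * hpd.1.eigenvalues i) m0
      (fun i _ => hg_lb i)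
    have hcard : (((Finset.univ.erase j).card : ℕ) : ℝ) = (n:ℝ) - 1 := by
      rw [Finset.card_erase_of_mem (Finset.mem_univ j), Finset.card_univ, Fintype.card_fin,
        Nat.cast_sub hn, Nat.cast_one]
    rw [nsmul_eq_mul, hcard] at h2
    beta_reduce at h1
    have hsum_le : (∑ i, (-a * Real.log (hpd.1.eigenvalues i) + b * hpd.1.eigenvalues i)) ≤ r := by
      linarith [hmain, hP2, hP3]
    rw [hK_def]
    linarith [h1, h2, hsum_le]
  -- lower bound on eigenvalues
  have hlo_le : ∀ j, lo ≤ hpd.1.eigenvalues j := by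
    intro j
    have h := hKj j
    have hbl : 0 < b * hpd.1.eigenvalues j := mul_pos hb (hlam j)
    have h2 : -K ≤ a * Real.log (hpd.1.eigenvalues j) := by linarith
    have h3 : -(K/a) ≤ Real.log (hpd.1.eigenvalues j) := by
      have he : -(K/a) = (-K)/a := by ring
      rw [he, div_le_iff₀ ha]
      nlinarith [h2]
    calc lo = Real.exp (-(K/a)) := hlo_def
      _ ≤ Real.exp (Real.log (hpd.1.eigenvalues j)) := Real.exp_le_exp.mpr h3
      _ = hpd.1.eigenvalues j := Real.exp_log (hlam j)
  -- upper bound on eigenvalues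
  have hhi_le : ∀ j, hpd.1.eigenvalues j ≤ hi := by
    intro j
    have h := hKj j
    have hc : (0:ℝ) < 2*a/b := by positivity
    have hl := log_le_lin (hlam j) hc
    have h5 : a * (hpd.1.eigenvalues j / (2*a/b)) = b * hpd.1.eigenvalues j / 2 := by
      field_simp
    have h6 := mul_le_mul_of_nonneg_left hl ha.le
    have h7 : b * hpd.1.eigenvalues j / 2 ≤ K + a * (Real.log (2*a/b) - 1) := by
      nlinarith [h5, h6, h]
    rw [hhi_def, le_div_iff₀ hb]
    linarith
  -- lower bound of quadratic form of Λ
  have hquad : ∀ x : Fin n → ℝ, lo * (x ⬝ᵥ x) ≤ x ⬝ᵥ Λ.mulVec x := le_quad hpd.1 hlo_le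
  -- bounds from the quadratic pieces
  have hQ3K : (κ/2) * ((μ - μ0) ⬝ᵥ Λ.mulVec (μ - μ0)) ≤ K0 := by
    have htest : (κ/2) * ((μ - μ0) ⬝ᵥ Λ.mulVec (μ - μ0)) ≤ r
        - (∑ i, (-a * Real.log (hpd.1.eigenvalues i) + b * hpd.1.eigenvalues i))
        - (1/2) * (∑ i, (C i - μ) ⬝ᵥ Λ.mulVec (C i - μ)) := by linarith [hmain]
    rw [hK0_def]
    linarith [htest, hG_lb, hP2]
  have hQ2K : ∀ i, (C i - μ) ⬝ᵥ Λ.mulVec (C i - μ) ≤ 2 * K0 := by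
    intro i
    have hle := Finset.single_le_sum (f := fun i => (C i - μ) ⬝ᵥ Λ.mulVec (C i - μ))
      (fun i _ => hQ2 i) (Finset.mem_univ i)
    rw [hK0_def]; linarith [hmain, hG_lb, hP3, hle]
  -- coordinatewise bound for μ
  have hμk : ∀ k, |μ k| ≤ Rμ := by
    intro k
    have hd : (μ - μ0) ⬝ᵥ (μ - μ0) ≤ 2*K0/(κ*lo) := by
      have h1 := hquad (μ - μ0)
      rw [le_div_iff₀ (by positivity)]
      nlinarith
    have hk2 : (μ k - μ0 k)^2 ≤ (μ - μ0) ⬝ᵥ (μ - μ0) := by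
      have := Finset.single_le_sum (f := fun i => (μ i - μ0 i) * (μ i - μ0 i))
        (fun i _ => mul_self_nonneg _) (Finset.mem_univ k)
      simpa [dotProduct, Pi.sub_apply, sq] using this
    have habs : |μ k - μ0 k| ≤ Real.sqrt (2*K0/(κ*lo)) :=
      Real.abs_le_sqrt (by linarith)
    have hμ0k : |μ0 k| ≤ ‖μ0‖ := by
      have := norm_le_pi_norm μ0 k
      rwa [Real.norm_eq_abs] at this
    rw [hRμ_def]
    calc |μ k| = |(μ k - μ0 k) + μ0 k| := by ring_nf
      _ ≤ |μ k - μ0 k| + |μ0 k| := abs_add_le _ _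
      _ ≤ ‖μ0‖ + Real.sqrt (2*K0/(κ*lo)) := by linarith
  -- coordinatewise bound for C
  have hCk : ∀ i k, |C i k| ≤ RC := by
    intro i k
    have hd : (C i - μ) ⬝ᵥ (C i - μ) ≤ 2*K0/lo := by
      have h1 := hquad (C i - μ)
      rw [le_div_iff₀ hlo]
      nlinarith [hQ2K i]
    have hk2 : (C i k - μ k)^2 ≤ (C i - μ) ⬝ᵥ (C i - μ) := by
      have := Finset.single_le_sum (f := fun l => (C i l - μ l) * (C i l - μ l))
        (fun l _ => mul_self_nonneg _) (Finset.mem_univ k)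
      simpa [dotProduct, Pi.sub_apply, sq] using this
    have habs : |C i k - μ k| ≤ Real.sqrt (2*K0/lo) :=
      Real.abs_le_sqrt (by linarith)
    rw [hRC_def]
    calc |C i k| = |(C i k - μ k) + μ k| := by ring_nf
      _ ≤ |C i k - μ k| + |μ k| := abs_add_le _ _
      _ ≤ Rμ + Real.sqrt (2*K0/lo) := by linarith [hμk k]
  -- entrywise bound for Λ
  have hsym : ∀ i j, Λ j i = Λ i j := by
    intro i j
    have := congrFun (congrFun hpd.1 i) j
    simpa [Matrix.conjTranspose_apply] using this
  have hdiag_nonneg : ∀ k, 0 ≤ Λ k k := by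
    intro k
    have h := hpd.posSemidef.dotProduct_mulVec_nonneg (Pi.single k 1)
    rw [star_trivial] at h
    rwa [single_quad Λ k k] at h
  have htr_le : Λ.trace ≤ (n:ℝ) * hi := by
    rw [htrΛ]
    have h := Finset.sum_le_card_nsmul Finset.univ (fun i => hpd.1.eigenvalues i) hi
      (fun i _ => hhi_le i)
    simpa [nsmul_eq_mul, Finset.card_univ] using h
  have hdiag_le : ∀ k, Λ k k ≤ Λ.trace := by
    intro k
    exact Finset.single_le_sum (f := fun l => Λ.diag l) (fun l _ => hdiag_nonneg l)
      (Finset.mem_univ k)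
  have hΛij : ∀ i j, |Λ i j| ≤ RΛ := by
    intro i j
    have hplus := hpd.posSemidef.dotProduct_mulVec_nonneg (Pi.single i (1:ℝ) + (1:ℝ) • (Pi.single j 1 : Fin n → ℝ))
    have hminus := hpd.posSemidef.dotProduct_mulVec_nonneg (Pi.single i (1:ℝ) + (-1:ℝ) • (Pi.single j 1 : Fin n → ℝ))
    rw [star_trivial] at hplus hminus
    rw [quad_expand Λ i j 1] at hplus
    rw [quad_expand Λ i j (-1)] at hminus
    rw [hsym i j] at hplus hminus
    have h1 : |Λ i j| ≤ (Λ i i + Λ j j)/2 := by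
      rw [abs_le]; constructor <;> nlinarith
    have h2 : Λ i i + Λ j j ≤ 2 * Λ.trace := by
      have := hdiag_le i; have := hdiag_le j; linarith
    have h3 : (0:ℝ) ≤ Λ.trace := by
      rw [Matrix.trace]; exact Finset.sum_nonneg fun l _ => hdiag_nonneg l
    rw [hRΛ_def]
    calc |Λ i j| ≤ Λ.trace := by linarith
      _ ≤ (n:ℝ) * hi := htr_le
  -- assemble the norm bound
  have hRμR : Rμ ≤ R := by
    rw [hR_def]
    exact le_trans (le_max_left _ _) (le_trans (le_max_right _ _) (le_max_right _ _))
  have hRCR : RC ≤ R := by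
    rw [hR_def]
    exact le_trans (le_max_left _ _) (le_max_right _ _)
  have hRΛR : RΛ ≤ R := by
    rw [hR_def]
    exact le_trans (le_max_right _ _) (le_trans (le_max_right _ _) (le_max_right _ _))
  show ‖((C, μ, Λ) : (Fin M → Fin n → ℝ) × (Fin n → ℝ) × Matrix (Fin n) (Fin n) ℝ)‖ ≤ R
  rw [Prod.norm_def]
  refine max_le ?_ ?_
  · rw [pi_norm_le_iff_of_nonneg hR0]
    intro i
    rw [pi_norm_le_iff_of_nonneg hR0]
    intro k
    rw [Real.norm_eq_abs]
    exact le_trans (hCk i k) hRCR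
  · rw [Prod.norm_def]
    refine max_le ?_ ?_
    · rw [pi_norm_le_iff_of_nonneg hR0]
      intro k
      rw [Real.norm_eq_abs]
      exact le_trans (hμk k) hRμR
    · rw [Matrix.norm_le_iff hR0]
      intro i j
      rw [Real.norm_eq_abs]
      exact le_trans (hΛij i j) hRΛR
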